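/- Let G be a graph partitioned into three sets A, B, C of sizes k, k+⌊r/2⌋, k+⌈r/2⌉ respectively (n = 3k+r, r ∈ {0,1,2}), with δ(G) ≥ 2n/3 and e(G[A]), e(G[B]), e(G[C]) ≤ μn²/18. Then each exceptional set X' = {v ∈ X : deg(v,Y) < k/3 for some other part Y} satisfies |X'| ≤ μn/2, for X ∈ {A, B, C}. -/

import Mathlib

section Aux
variable {V : Type*} [Fintype V] [DecidableEq V]

private def indG (G : SimpleGraph V) (X : Finset V) : SimpleGraph V where
  Adj a b := G.Adj a b ∧ a ∈ X ∧ b ∈ X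
  symm := ⟨fun a b => by rintro ⟨h, ha, hb⟩; exact ⟨h.symm, hb, ha⟩⟩
  loopless := ⟨fun a => by rintro ⟨h, _, _⟩; exact G.loopless.irrefl a h⟩

private instance (G : SimpleGraph V) [DecidableRel G.Adj] (X : Finset V) :
    DecidableRel (indG G X).Adj :=
  fun a b => decidable_of_iff (G.Adj a b ∧ a ∈ X ∧ b ∈ X) Iff.rfl

private lemma sum_deg_eq (G : SimpleGraph V) [DecidableRel G.Adj] (X : Finset V) :
    ∑ v ∈ X, (X.filter (G.Adj v ·)).card
      = 2 * (G.edgeFinset.filter fun e => ∀ v ∈ e, v ∈ X).card := by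
  have hedge : (indG G X).edgeFinset = G.edgeFinset.filter fun e => ∀ v ∈ e, v ∈ X := by
    ext e
    induction e using Sym2.ind with
    | _ a b =>
      simp only [SimpleGraph.mem_edgeFinset, Finset.mem_filter, Sym2.mem_iff,
        SimpleGraph.mem_edgeSet]
      show G.Adj a b ∧ a ∈ X ∧ b ∈ X ↔ _
      constructor
      · rintro ⟨h, ha, hb⟩
        exact ⟨h, by rintro v (rfl|rfl) <;> assumption⟩
      · rintro ⟨h1, h2⟩
        exact ⟨h1, h2 a (Or.inl rfl), h2 b (Or.inr rfl)⟩
  have hdeg : ∀ v ∈ X, (indG G X).degree v = (X.filter (G.Adj v ·)).card := by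
    intro v hv
    rw [SimpleGraph.degree, SimpleGraph.neighborFinset]
    congr 1
    ext b
    simp [indG, SimpleGraph.mem_neighborSet, hv]
    have key : b ∈ ((indG G X).neighborSet v).toFinset ↔ b ∈ X ∧ G.Adj v b := by
      rw [Set.mem_toFinset, SimpleGraph.mem_neighborSet]
      show (G.Adj v b ∧ v ∈ X ∧ b ∈ X) ↔ _
      tauto
    exact key
  have hdeg0 : ∀ v ∉ X, (indG G X).degree v = 0 := by
    intro v hv
    rw [SimpleGraph.degree, Finset.card_eq_zero]
    ext b
    simp [SimpleGraph.mem_neighborFinset, indG]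
    erw [SimpleGraph.mem_neighborFinset]
    show ¬ (G.Adj v b ∧ v ∈ X ∧ b ∈ X)
    tauto
  have := (indG G X).sum_degrees_eq_twice_card_edges
  rw [hedge] at this
  rw [← this]
  rw [← Finset.sum_subset (Finset.subset_univ X)]
  · exact Finset.sum_congr rfl fun v hv => (hdeg v hv).symm
  · intro v _ hv; exact hdeg0 v hv

private lemma part_bound (n k r : ℕ)
    (hn : Fintype.card V = n) (hnkr : n = 3 * k + r) (hr : r < 3)
    (μ : ℝ) (hμ : 0 ≤ μ) (G : SimpleGraph V) [DecidableRel G.Adj]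
    (hδ : 2 * (n : ℝ) / 3 ≤ G.minDegree)
    (X Y Z : Finset V)
    (hcover : ∀ v : V, v ∈ X ∨ v ∈ Y ∨ v ∈ Z)
    (hY : Y.card ≤ k + (r + 1) / 2) (hZ : Z.card ≤ k + (r + 1) / 2)
    (heX : ((G.edgeFinset.filter fun e => ∀ v ∈ e, v ∈ X).card : ℝ) ≤ μ * n ^ 2 / 18) :
    ((X.filter fun v => ((Y.filter (G.Adj v ·)).card : ℝ) < k / 3 ∨
        ((Z.filter (G.Adj v ·)).card : ℝ) < k / 3).card : ℝ) ≤ μ * n / 2 := by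
  set X' := X.filter fun v => ((Y.filter (G.Adj v ·)).card : ℝ) < k / 3 ∨
        ((Z.filter (G.Adj v ·)).card : ℝ) < k / 3 with hX'
  rcases Nat.eq_zero_or_pos n with h0 | hpos
  · have : X' = ∅ := by
      rw [← Finset.card_eq_zero]
      have := Finset.card_le_univ X'
      omega
    rw [this]
    simp only [Finset.card_empty, Nat.cast_zero]
    positivity
  -- per-vertex bound: each v ∈ X' has 9 * deg(v, X) ≥ 2n
  have key : ∀ v ∈ X', 2 * n ≤ 9 * (X.filter (G.Adj v ·)).card := by
    intro v hv
    rw [hX', Finset.mem_filter] at hv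
    obtain ⟨hvX, hex⟩ := hv
    -- degree bound
    have hmin : 2 * n ≤ 3 * G.degree v := by
      have h1 : (G.minDegree : ℝ) ≤ G.degree v := by
        exact_mod_cast G.minDegree_le_degree v
      have := hδ.trans h1
      have : (2 * n : ℝ) ≤ 3 * G.degree v := by linarith
      exact_mod_cast this
    -- degree split
    have hsplit : G.degree v ≤ (X.filter (G.Adj v ·)).card + (Y.filter (G.Adj v ·)).card
        + (Z.filter (G.Adj v ·)).card := by
      rw [SimpleGraph.degree, SimpleGraph.neighborFinset]
      have hsub : (G.neighborSet v).toFinset ⊆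
          (X.filter (G.Adj v ·)) ∪ (Y.filter (G.Adj v ·)) ∪ (Z.filter (G.Adj v ·)) := by
        intro b hb
        rw [Set.mem_toFinset, SimpleGraph.mem_neighborSet] at hb
        rcases hcover b with h | h | h <;>
          simp [Finset.mem_union, Finset.mem_filter, h, hb]
      calc (G.neighborSet v).toFinset.card
          ≤ _ := Finset.card_le_card hsub
        _ ≤ _ := (Finset.card_union_le _ _).trans
            (by exact Nat.add_le_add_right (Finset.card_union_le _ _) _)
    have hYb : (Y.filter (G.Adj v ·)).card ≤ k + (r + 1) / 2 :=
      (Finset.card_filter_le _ _).trans hY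
    have hZb : (Z.filter (G.Adj v ·)).card ≤ k + (r + 1) / 2 :=
      (Finset.card_filter_le _ _).trans hZ
    rcases hex with hsmall | hsmall
    · have h3 : 3 * (Y.filter (G.Adj v ·)).card < k := by
        have : (3 * (Y.filter (G.Adj v ·)).card : ℝ) < k := by linarith
        exact_mod_cast this
      interval_cases r <;> omega
    · have h3 : 3 * (Z.filter (G.Adj v ·)).card < k := by
        have : (3 * (Z.filter (G.Adj v ·)).card : ℝ) < k := by linarith
        exact_mod_cast this
      interval_cases r <;> omega
  -- double counting
  have hdc : ∑ v ∈ X, (X.filter (G.Adj v ·)).card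
      = 2 * (G.edgeFinset.filter fun e => ∀ v ∈ e, v ∈ X).card := sum_deg_eq G X
  have hsum : X'.card * (2 * n) ≤ 9 * ∑ v ∈ X, (X.filter (G.Adj v ·)).card := by
    calc X'.card * (2 * n) = ∑ _v ∈ X', 2 * n := by
          rw [Finset.sum_const, smul_eq_mul]
      _ ≤ ∑ v ∈ X', 9 * (X.filter (G.Adj v ·)).card := Finset.sum_le_sum key
      _ = 9 * ∑ v ∈ X', (X.filter (G.Adj v ·)).card := by rw [Finset.mul_sum]
      _ ≤ 9 * ∑ v ∈ X, (X.filter (G.Adj v ·)).card := by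
          apply Nat.mul_le_mul_left
          exact Finset.sum_le_sum_of_subset (Finset.filter_subset _ _)
  rw [hdc] at hsum
  have hsum' : X'.card * (2 * n) ≤
      18 * (G.edgeFinset.filter fun e => ∀ v ∈ e, v ∈ X).card := by omega
  have hreal : (X'.card : ℝ) * (2 * n) ≤
      18 * (G.edgeFinset.filter fun e => ∀ v ∈ e, v ∈ X).card := by
    exact_mod_cast hsum'
  have hn0 : (0 : ℝ) < n := by exact_mod_cast hpos
  nlinarith [hreal, heX, hn0]

end Aux

/-- Let `G` be a graph on `n = 3k + r` vertices (`r ∈ {0,1,2}`) with `δ(G) ≥ 2n/3`, whose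
vertex set is partitioned into sets `A`, `B`, `C` of sizes `k`, `k + ⌊r/2⌋`, `k + ⌈r/2⌉`,
each spanning at most `μn²/18` edges.  Then for each part `X`, the exceptional set
`X' = {v ∈ X : deg(v,Y) < k/3 for some other part Y}` has size at most `μn/2`. -/
theorem stmt_18 {V : Type*} [Fintype V] [DecidableEq V] (n k r : ℕ)
    (hn : Fintype.card V = n) (hnkr : n = 3 * k + r) (hr : r < 3)
    (μ : ℝ) (hμ : 0 ≤ μ) (G : SimpleGraph V) [DecidableRel G.Adj]
    (hδ : 2 * (n : ℝ) / 3 ≤ G.minDegree)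
    (A B C : Finset V) (hAB : Disjoint A B) (hAC : Disjoint A C) (hBC : Disjoint B C)
    (hunion : A ∪ B ∪ C = Finset.univ)
    (hAcard : A.card = k) (hBcard : B.card = k + r / 2) (hCcard : C.card = k + (r + 1) / 2)
    (heA : ((G.edgeFinset.filter fun e => ∀ v ∈ e, v ∈ A).card : ℝ) ≤ μ * n ^ 2 / 18)
    (heB : ((G.edgeFinset.filter fun e => ∀ v ∈ e, v ∈ B).card : ℝ) ≤ μ * n ^ 2 / 18)
    (heC : ((G.edgeFinset.filter fun e => ∀ v ∈ e, v ∈ C).card : ℝ) ≤ μ * n ^ 2 / 18) :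
    (((A.filter fun v => ((B.filter (G.Adj v ·)).card : ℝ) < k / 3 ∨
        ((C.filter (G.Adj v ·)).card : ℝ) < k / 3).card : ℝ) ≤ μ * n / 2) ∧
    (((B.filter fun v => ((A.filter (G.Adj v ·)).card : ℝ) < k / 3 ∨
        ((C.filter (G.Adj v ·)).card : ℝ) < k / 3).card : ℝ) ≤ μ * n / 2) ∧
    (((C.filter fun v => ((A.filter (G.Adj v ·)).card : ℝ) < k / 3 ∨
        ((B.filter (G.Adj v ·)).card : ℝ) < k / 3).card : ℝ) ≤ μ * n / 2) := by
  have hcover : ∀ v : V, v ∈ A ∨ v ∈ B ∨ v ∈ C := by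
    intro v
    have := Finset.mem_univ v
    rw [← hunion] at this
    simpa [Finset.mem_union, or_assoc] using this
  have hBle : B.card ≤ k + (r + 1) / 2 := by omega
  have hCle : C.card ≤ k + (r + 1) / 2 := by omega
  have hAle : A.card ≤ k + (r + 1) / 2 := by omega
  refine ⟨?_, ?_, ?_⟩
  · exact part_bound n k r hn hnkr hr μ hμ G hδ A B C hcover hBle hCle heA
  · exact part_bound n k r hn hnkr hr μ hμ G hδ B A C
      (fun v => by rcases hcover v with h|h|h <;> tauto) hAle hCle heB
  · exact part_bound n k r hn hnkr hr μ hμ G hδ C A B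
      (fun v => by rcases hcover v with h|h|h <;> tauto) hAle hBle heC
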